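/- Let N ≥ 3, m > 1, σ > max{-2,-N}, p > m. The quadratic dynamical system X' = X(2-(m-1)Y), Y' = -X-(N-2)Y-Z-mY²-((p-m)/(σ+2))XY, Z' = Z(σ+2+(p-m)Y), restricted to the region {X ≥ 0, Z ≥ 0}, has exactly the critical points P₀ = (0,0,0), P₁ = (0,-(N-2)/m,0) and, when p > p_c(σ) = m(N+σ)/(N-2), additionally P₂ = (0, -(σ+2)/(p-m), (N-2)(σ+2)(p-p_c(σ))/(p-m)²); when p ≤ p_c(σ) the only critical points with X ≥ 0, Z ≥ 0 are P₀ and P₁. -/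

import Mathlib

lemma crit_aux (N m σ p x y z : ℝ) (hN2 : 0 < N - 2) (hm : 1 < m) (hs : 0 < σ + 2)
    (hpm : 0 < p - m) (hx : 0 ≤ x) (hz : 0 ≤ z)
    (e1 : x * (2 - (m - 1) * y) = 0)
    (e2 : -x - (N - 2) * y - z - m * y ^ 2 - ((p - m) / (σ + 2)) * x * y = 0)
    (e3 : z * (σ + 2 + (p - m) * y) = 0) :
    (x = 0 ∧ y = 0 ∧ z = 0) ∨ (x = 0 ∧ y = -(N - 2) / m ∧ z = 0) ∨
    (x = 0 ∧ y = -(σ + 2) / (p - m) ∧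
      (p - m) ^ 2 * z = (σ + 2) * ((N - 2) * (p - m) - m * (σ + 2))) := by
  have hm0 : (0:ℝ) < m := by linarith
  have hx0 : x = 0 := by
    rcases eq_or_lt_of_le hx with h | h
    · exact h.symm
    · exfalso
      rcases mul_eq_zero.mp e1 with h0 | h0
      · linarith
      have hy : 0 < y := by
        have hm1 : (0:ℝ) < m - 1 := by linarith
        nlinarith
      have hc : 0 < (p - m) / (σ + 2) := div_pos hpm hs
      nlinarith [mul_pos h hy, mul_pos hc (mul_pos h hy), mul_pos hN2 hy,
        mul_nonneg hm0.le (sq_nonneg y)]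
  subst hx0
  rcases mul_eq_zero.mp e3 with hz0 | h0
  · subst hz0
    have hy : y * ((N - 2) + m * y) = 0 := by linear_combination -e2
    rcases mul_eq_zero.mp hy with h | h
    · exact Or.inl ⟨rfl, h, rfl⟩
    · refine Or.inr (Or.inl ⟨rfl, ?_, rfl⟩)
      field_simp
      linarith
  · refine Or.inr (Or.inr ⟨rfl, ?_, ?_⟩)
    · field_simp
      linarith [h0]
    · linear_combination (-(p - m) ^ 2) * e2 +
        (-(N - 2) * (p - m) + m * ((σ + 2) - (p - m) * y)) * h0

theorem finite_critical_points (N : ℕ) (hN : 3 ≤ N) (m σ p : ℝ) (hm : 1 < m)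
    (hσ : σ > max (-2) (-(N : ℝ))) (hp : p > m) :
    (p > m * ((N : ℝ) + σ) / ((N : ℝ) - 2) →
      {q : ℝ × ℝ × ℝ | 0 ≤ q.1 ∧ 0 ≤ q.2.2 ∧
          q.1 * (2 - (m - 1) * q.2.1) = 0 ∧
          -q.1 - ((N : ℝ) - 2) * q.2.1 - q.2.2 - m * q.2.1 ^ 2
            - ((p - m) / (σ + 2)) * q.1 * q.2.1 = 0 ∧
          q.2.2 * (σ + 2 + (p - m) * q.2.1) = 0}
        = {(0, 0, 0), (0, -((N : ℝ) - 2) / m, 0),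
            (0, -(σ + 2) / (p - m),
              ((N : ℝ) - 2) * (σ + 2) * (p - m * ((N : ℝ) + σ) / ((N : ℝ) - 2))
                / (p - m) ^ 2)}) ∧
    (p ≤ m * ((N : ℝ) + σ) / ((N : ℝ) - 2) →
      {q : ℝ × ℝ × ℝ | 0 ≤ q.1 ∧ 0 ≤ q.2.2 ∧
          q.1 * (2 - (m - 1) * q.2.1) = 0 ∧
          -q.1 - ((N : ℝ) - 2) * q.2.1 - q.2.2 - m * q.2.1 ^ 2
            - ((p - m) / (σ + 2)) * q.1 * q.2.1 = 0 ∧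
          q.2.2 * (σ + 2 + (p - m) * q.2.1) = 0}
        = {(0, 0, 0), (0, -((N : ℝ) - 2) / m, 0)}) := by
  have h2σ : (-2:ℝ) < σ := lt_of_le_of_lt (le_max_left _ _) hσ
  have hs : (0:ℝ) < σ + 2 := by linarith
  have hpm : (0:ℝ) < p - m := by linarith
  have hm0 : (0:ℝ) < m := by linarith
  have hN3 : (3:ℝ) ≤ (N:ℝ) := by exact_mod_cast hN
  have hN2 : (0:ℝ) < (N:ℝ) - 2 := by linarith
  have hN2' : ((N:ℝ) - 2) ≠ 0 := ne_of_gt hN2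
  have hpm' : (p - m) ≠ 0 := ne_of_gt hpm
  have hm' : m ≠ 0 := ne_of_gt hm0
  have hs' : (σ + 2) ≠ 0 := ne_of_gt hs
  constructor
  · intro hpc
    ext ⟨x, y, z⟩
    simp only [Set.mem_setOf_eq, Set.mem_insert_iff, Set.mem_singleton_iff, Prod.mk.injEq]
    constructor
    · rintro ⟨hx, hz, e1, e2, e3⟩
      rcases crit_aux (N:ℝ) m σ p x y z hN2 hm hs hpm hx hz e1 e2 e3 with
        ⟨h1, h2, h3⟩ | ⟨h1, h2, h3⟩ | ⟨h1, h2, h3⟩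
      · exact Or.inl ⟨h1, h2, h3⟩
      · exact Or.inr (Or.inl ⟨h1, h2, h3⟩)
      · refine Or.inr (Or.inr ⟨h1, h2, ?_⟩)
        field_simp
        linear_combination h3
    · rintro (⟨rfl, rfl, rfl⟩ | ⟨rfl, rfl, rfl⟩ | ⟨rfl, rfl, rfl⟩)
      · refine ⟨le_refl _, le_refl _, by ring, by ring, by ring⟩
      · refine ⟨le_refl _, le_refl _, by ring, ?_, by ring⟩
        field_simp
        ring
      · have hz2 : (0:ℝ) ≤ ((N:ℝ) - 2) * (σ + 2) * (p - m * ((N:ℝ) + σ) / ((N:ℝ) - 2))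
            / (p - m) ^ 2 := by
          apply le_of_lt
          apply div_pos
          · apply mul_pos (mul_pos hN2 hs)
            linarith
          · positivity
        refine ⟨le_refl _, hz2, by ring, ?_, ?_⟩
        · field_simp
          ring
        · apply mul_eq_zero.mpr (Or.inr _)
          field_simp
          ring
  · intro hple
    have hkey : ((N:ℝ) - 2) * (p - m) - m * (σ + 2) ≤ 0 := by
      have := (le_div_iff₀ hN2).mp hple
      linarith
    ext ⟨x, y, z⟩
    simp only [Set.mem_setOf_eq, Set.mem_insert_iff, Set.mem_singleton_iff, Prod.mk.injEq]
    constructor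
    · rintro ⟨hx, hz, e1, e2, e3⟩
      rcases crit_aux (N:ℝ) m σ p x y z hN2 hm hs hpm hx hz e1 e2 e3 with
        ⟨h1, h2, h3⟩ | ⟨h1, h2, h3⟩ | ⟨h1, h2, h3⟩
      · exact Or.inl ⟨h1, h2, h3⟩
      · exact Or.inr ⟨h1, h2, h3⟩
      · -- z must be 0, and then y = -(N-2)/m
        have hzle : z ≤ 0 := by
          nlinarith [mul_pos hpm hpm, mul_nonneg hs.le (neg_nonneg.mpr hkey)]
        have hz0 : z = 0 := le_antisymm hzle hz
        rw [hz0] at h3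
        have heq : ((N:ℝ) - 2) * (p - m) - m * (σ + 2) = 0 := by
          rcases mul_eq_zero.mp (by linear_combination -h3 :
              (σ + 2) * (((N:ℝ) - 2) * (p - m) - m * (σ + 2)) = 0) with h | h
          · exact absurd h hs'
          · exact h
        refine Or.inr ⟨h1, ?_, hz0⟩
        rw [h2, div_eq_div_iff hpm' hm']
        linear_combination heq
    · rintro (⟨rfl, rfl, rfl⟩ | ⟨rfl, rfl, rfl⟩)
      · refine ⟨le_refl _, le_refl _, by ring, by ring, by ring⟩
      · refine ⟨le_refl _, le_refl _, by ring, ?_, by ring⟩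
        field_simp
        ring
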